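/- arXiv:2003.11359 — 2 statements merged into one kernel-verified Lean document; each statement's English description precedes it below -/
import Mathlib

section
/- Let m > 0, let O, v_O, ω : ℝ → ℝ³ be differentiable with O'(t) = v_O(t), and define the vector potential A(t,x) = m (v_O(t) + ω(t) × (x − O(t))) and the scalar potential φ(t,x) = ‖A(t,x)‖²/(2m) = (m/2) ‖v_O(t) + ω(t) × (x − O(t))‖². Define E(t,x) = (∇_x φ(t,·))(x) − ∂A/∂t(t,x). Then for all t ∈ ℝ and x ∈ ℝ³, E(t,x) = −m [ v_O'(t) + ω'(t) × (x − O(t)) + ω(t) × (ω(t) × (x − O(t))) ], i.e. E equals minus m times the dragging (translational) acceleration a_τ, so E is exactly the dragging force F_τ = −m a_τ. -/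
noncomputable section
open scoped RealInnerProductSpace

/-- Euclidean 3-space. -/
abbrev E3 : Type := EuclideanSpace ℝ (Fin 3)

/-- Constructor for vectors in `E3` from three coordinates. -/
def vec3 (a b c : ℝ) : E3 := (WithLp.equiv 2 (Fin 3 → ℝ)).symm ![a, b, c]

/-- The cross product on `E3`. -/
def cross3 (a b : E3) : E3 :=
  vec3 (a 1 * b 2 - a 2 * b 1) (a 2 * b 0 - a 0 * b 2) (a 0 * b 1 - a 1 * b 0)

/-- `pderiv3 F j x i` is the partial derivative `∂_j F_i` at `x`. -/
def pderiv3 (F : E3 → E3) (j : Fin 3) (x : E3) (i : Fin 3) : ℝ :=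
  fderiv ℝ F x (EuclideanSpace.single j 1) i

/-- The curl `∇ × F` of a vector field on `E3`:
`(∇×F)_1 = ∂_2 F_3 − ∂_3 F_2`, `(∇×F)_2 = ∂_3 F_1 − ∂_1 F_3`, `(∇×F)_3 = ∂_1 F_2 − ∂_2 F_1`
(written here with 0-based indices). -/
def curl3 (F : E3 → E3) (x : E3) : E3 :=
  vec3 (pderiv3 F 1 x 2 - pderiv3 F 2 x 1)
       (pderiv3 F 2 x 0 - pderiv3 F 0 x 2)
       (pderiv3 F 0 x 1 - pderiv3 F 1 x 0)

/-- The divergence `∇ · F = ∂_1 F_1 + ∂_2 F_2 + ∂_3 F_3` of a vector field on `E3`. -/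
def div3 (F : E3 → E3) (x : E3) : ℝ :=
  pderiv3 F 0 x 0 + pderiv3 F 1 x 1 + pderiv3 F 2 x 2

@[simp] lemma vec3_0 (a b c : ℝ) : vec3 a b c 0 = a := rfl
@[simp] lemma vec3_1 (a b c : ℝ) : vec3 a b c 1 = b := rfl
@[simp] lemma vec3_2 (a b c : ℝ) : vec3 a b c 2 = c := rfl
@[simp] lemma vec3_mk0 (a b c : ℝ) (h : 0 < 3) : vec3 a b c ⟨0, h⟩ = a := rfl
@[simp] lemma vec3_mk1 (a b c : ℝ) (h : 1 < 3) : vec3 a b c ⟨1, h⟩ = b := rfl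
@[simp] lemma vec3_mk2 (a b c : ℝ) (h : 2 < 3) : vec3 a b c ⟨2, h⟩ = c := rfl

lemma e3_ext {u v : E3} (h : ∀ i, u i = v i) : u = v := PiLp.ext h

/-- cross with fixed left argument as a continuous linear map -/
def crossCLM (a : E3) : E3 →L[ℝ] E3 :=
  LinearMap.toContinuousLinearMap
  { toFun := fun b => cross3 a b
    map_add' := by
      intro u v; apply e3_ext; intro i
      fin_cases i <;> simp [cross3] <;> ring
    map_smul' := by
      intro c u; apply e3_ext; intro i
      fin_cases i <;> simp [cross3] <;> ring }

@[simp] lemma crossCLM_apply (a b : E3) : crossCLM a b = cross3 a b := rfl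

/-- derivative of vec3 of three functions -/
lemma HasDerivAt.vec3 {a b c : ℝ → ℝ} {a' b' c' t : ℝ}
    (ha : HasDerivAt a a' t) (hb : HasDerivAt b b' t) (hc : HasDerivAt c c' t) :
    HasDerivAt (fun s => vec3 (a s) (b s) (c s)) (vec3 a' b' c') t := by
  have h : HasDerivAt (fun s => ![a s, b s, c s]) ![a', b', c'] t := by
    rw [hasDerivAt_pi]
    intro i; fin_cases i <;> simpa
  have e := (PiLp.continuousLinearEquiv 2 ℝ (fun _ : Fin 3 => ℝ)).symm
  exact ((PiLp.continuousLinearEquiv 2 ℝ (fun _ : Fin 3 => ℝ)).symm :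
    (Fin 3 → ℝ) →L[ℝ] E3).hasFDerivAt.comp_hasDerivAt t h

lemma HasDerivAt.e3_apply {f : ℝ → E3} {f' : E3} {t : ℝ} (hf : HasDerivAt f f' t) (i : Fin 3) :
    HasDerivAt (fun s => f s i) (f' i) t :=
  (EuclideanSpace.proj i (𝕜 := ℝ)).hasFDerivAt.comp_hasDerivAt t hf

lemma HasDerivAt.cross3 {f g : ℝ → E3} {f' g' : E3} {t : ℝ}
    (hf : HasDerivAt f f' t) (hg : HasDerivAt g g' t) :
    HasDerivAt (fun s => cross3 (f s) (g s)) (cross3 f' (g t) + cross3 (f t) g') t := by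
  have h := HasDerivAt.vec3
    (((hf.e3_apply 1).mul (hg.e3_apply 2)).sub ((hf.e3_apply 2).mul (hg.e3_apply 1)))
    (((hf.e3_apply 2).mul (hg.e3_apply 0)).sub ((hf.e3_apply 0).mul (hg.e3_apply 2)))
    (((hf.e3_apply 0).mul (hg.e3_apply 1)).sub ((hf.e3_apply 1).mul (hg.e3_apply 0)))
  convert h using 1
  · rfl
  apply e3_ext; intro i
  fin_cases i <;> simp [_root_.cross3] <;> ring

lemma grad_aux (m : ℝ) (hm : m ≠ 0) (w0 a c : E3) (x : E3)
    (f : E3 → ℝ) (hf : f = fun y => (m / 2) * ⟪w0 + cross3 a (y - c), w0 + cross3 a (y - c)⟫) :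
    HasGradientAt f (m • cross3 (w0 + cross3 a (x - c)) a) x := by
  set w : E3 → E3 := fun y => w0 + cross3 a (y - c) with hw
  have hFw : HasFDerivAt w (crossCLM a) x := by
    have hrw : w = fun y => (w0 - cross3 a c) + crossCLM a y := by
      funext y
      simp only [hw, ← crossCLM_apply, map_sub]
      abel
    rw [hrw]
    exact (crossCLM a).hasFDerivAt.const_add (w0 - cross3 a c)
  have hinner := (hFw.inner ℝ hFw).const_mul (m / 2)
  rw [hasGradientAt_iff_hasFDerivAt]
  have hfeq : f = fun y => (m/2) * ⟪w y, w y⟫ := hf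
  rw [hfeq]
  refine hinner.congr_fderiv ?_
  ext h
  simp only [InnerProductSpace.toDual_apply_apply, ContinuousLinearMap.coe_smul',
    Pi.smul_apply, ContinuousLinearMap.coe_comp', Function.comp_apply,
    ContinuousLinearMap.prod_apply, fderivInnerCLM_apply, crossCLM_apply,
    smul_eq_mul]
  simp only [hw, real_inner_smul_left, PiLp.inner_apply, RCLike.inner_apply, conj_trivial,
    Fin.sum_univ_three, cross3, vec3_0, vec3_1, vec3_2, PiLp.add_apply, PiLp.sub_apply,
    PiLp.smul_apply, smul_eq_mul]
  ring


/-- For the vector potential `A = m v_τ` and scalar potential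
`φ = ‖A‖²/(2m) = (m/2)‖v_τ‖²` of a rigid frame motion, the field `E = ∇ₓφ − ∂A/∂t`
equals minus `m` times the dragging acceleration
`a_τ = a_O + ω' × (x − O) + ω × (ω × (x − O))`, i.e. `E` is the dragging force `−m a_τ`. -/
theorem E_eq_dragging_force (m : ℝ) (hm : 0 < m) (O vO ω : ℝ → E3)
    (hO : Differentiable ℝ O) (hvO : Differentiable ℝ vO) (hω : Differentiable ℝ ω)
    (hO' : ∀ t, deriv O t = vO t)
    (A : ℝ → E3 → E3) (hA : ∀ t x, A t x = m • (vO t + cross3 (ω t) (x - O t)))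
    (φ : ℝ → E3 → ℝ) (hφ : ∀ t x, φ t x = ‖A t x‖ ^ 2 / (2 * m))
    (Efld : ℝ → E3 → E3)
    (hE : ∀ t x, Efld t x = gradient (φ t) x - deriv (fun s => A s x) t)
    (t : ℝ) (x : E3) :
    Efld t x = -(m • (deriv vO t + cross3 (deriv ω t) (x - O t)
      + cross3 (ω t) (cross3 (ω t) (x - O t)))) := by
  have hm' : m ≠ 0 := ne_of_gt hm
  -- gradient part
  have hφeq : φ t = fun y => (m / 2) * ⟪vO t + cross3 (ω t) (y - O t),
      vO t + cross3 (ω t) (y - O t)⟫ := by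
    funext y
    rw [hφ, hA, real_inner_self_eq_norm_sq]
    rw [norm_smul]
    simp only [Real.norm_eq_abs]
    rw [mul_pow, sq_abs]
    field_simp
  have hgrad : gradient (φ t) x
      = m • cross3 (vO t + cross3 (ω t) (x - O t)) (ω t) :=
    (grad_aux m hm' (vO t) (ω t) (O t) x (φ t) hφeq).gradient
  -- time derivative part
  have hDO : HasDerivAt O (vO t) t := by
    have h := (hO t).hasDerivAt
    rwa [hO'] at h
  have hr : HasDerivAt (fun s => x - O s) (0 - vO t) t :=
    (hasDerivAt_const t x).sub hDO
  have hc : HasDerivAt (fun s => cross3 (ω s) (x - O s))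
      (cross3 (deriv ω t) (x - O t) + cross3 (ω t) (0 - vO t)) t :=
    HasDerivAt.cross3 (hω t).hasDerivAt hr
  have hAd : HasDerivAt (fun s => A s x)
      (m • (deriv vO t + (cross3 (deriv ω t) (x - O t) + cross3 (ω t) (0 - vO t)))) t := by
    have : (fun s => A s x) = fun s => m • (vO s + cross3 (ω s) (x - O s)) := by
      funext s; exact hA s x
    rw [this]
    exact ((hvO t).hasDerivAt.add hc).const_smul m
  rw [hE, hgrad, hAd.deriv]
  apply e3_ext; intro i
  fin_cases i <;>
    simp only [cross3, vec3_0, vec3_1, vec3_2, vec3_mk0, vec3_mk1, vec3_mk2, PiLp.add_apply, PiLp.sub_apply,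
      PiLp.neg_apply, PiLp.smul_apply, PiLp.zero_apply, smul_eq_mul] <;>
    ring
end
end

section
/- Let m > 0, let O, ω : ℝ → ℝ³ be differentiable with O'(t) = v_O(t), and define the generalized potential U₂(t,x,v) = m (ω(t) × (x − O(t))) · v on ℝ × ℝ³ × ℝ³. Then for every twice differentiable curve x : ℝ → ℝ³ and every t ∈ ℝ, ∇_x U₂(t, x(t), ẋ(t)) − d/dt [∇_v U₂(t, x(t), ẋ(t))] = −2m ω(t) × ẋ(t) − m ω'(t) × (x(t) − O(t)) − m v_O(t) × ω(t), where ∇_x and ∇_v denote gradients with respect to the position and velocity arguments. -/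
noncomputable section
open scoped RealInnerProductSpace

lemma inner3 (a b : E3) : ⟪a,b⟫ = a 0 * b 0 + a 1 * b 1 + a 2 * b 2 := by
  simp [PiLp.inner_apply, Fin.sum_univ_three]
  ring

lemma gradA (m : ℝ) (c p : E3) : HasGradientAt (fun w : E3 => m * ⟪c, w⟫) (m • c) p := by
  rw [hasGradientAt_iff_hasFDerivAt]
  have h : HasFDerivAt (fun w : E3 => m * ⟪c, w⟫) (m • (innerSL ℝ c)) p :=
    (innerSL ℝ c).hasFDerivAt.const_mul m
  refine h.congr_fderiv ?_
  ext y
  simp [InnerProductSpace.toDual_apply_apply, inner_smul_left]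

lemma hasDerivAt_coord (f : ℝ → E3) (f' : E3) (t : ℝ) (hf : HasDerivAt f f' t) (i : Fin 3) :
    HasDerivAt (fun s => f s i) (f' i) t := by
  have := (EuclideanSpace.proj (𝕜 := ℝ) i).hasFDerivAt.comp_hasDerivAt t hf
  exact this

lemma hasDerivAt_cross (f g : ℝ → E3) (f' g' : E3) (t : ℝ)
    (hf : HasDerivAt f f' t) (hg : HasDerivAt g g' t) :
    HasDerivAt (fun s => cross3 (f s) (g s)) (cross3 f' (g t) + cross3 (f t) g') t := by
  have h0f := hasDerivAt_coord f f' t hf 0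
  have h1f := hasDerivAt_coord f f' t hf 1
  have h2f := hasDerivAt_coord f f' t hf 2
  have h0g := hasDerivAt_coord g g' t hg 0
  have h1g := hasDerivAt_coord g g' t hg 1
  have h2g := hasDerivAt_coord g g' t hg 2
  have hPi : HasDerivAt (fun s => ![f s 1 * g s 2 - f s 2 * g s 1,
      f s 2 * g s 0 - f s 0 * g s 2, f s 0 * g s 1 - f s 1 * g s 0])
      ![f' 1 * g t 2 + f t 1 * g' 2 - (f' 2 * g t 1 + f t 2 * g' 1),
        f' 2 * g t 0 + f t 2 * g' 0 - (f' 0 * g t 2 + f t 0 * g' 2),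
        f' 0 * g t 1 + f t 0 * g' 1 - (f' 1 * g t 0 + f t 1 * g' 0)] t := by
    rw [hasDerivAt_pi]
    intro i
    fin_cases i
    · simp; exact (h1f.mul h2g).sub (h2f.mul h1g)
    · simp; exact (h2f.mul h0g).sub (h0f.mul h2g)
    · simp; exact (h0f.mul h1g).sub (h1f.mul h0g)
  have h := ((EuclideanSpace.equiv (Fin 3) ℝ).symm :
      (Fin 3 → ℝ) →L[ℝ] E3).hasFDerivAt.comp_hasDerivAt t hPi
  have heq : (fun s => cross3 (f s) (g s)) =
      fun s => ((EuclideanSpace.equiv (Fin 3) ℝ).symm : (Fin 3 → ℝ) →L[ℝ] E3)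
        (![f s 1 * g s 2 - f s 2 * g s 1, f s 2 * g s 0 - f s 0 * g s 2,
           f s 0 * g s 1 - f s 1 * g s 0]) := by
    funext s
    ext i
    fin_cases i <;> simp [cross3]
  rw [heq]
  refine h.congr_deriv ?_
  ext i
  fin_cases i <;> simp [cross3] <;> ring

lemma gradB (m : ℝ) (c : E3) (d : ℝ) (p : E3) :
    HasGradientAt (fun y : E3 => m * ⟪c, y⟫ - d) (m • c) p := by
  rw [hasGradientAt_iff_hasFDerivAt]
  have h := ((innerSL ℝ c).hasFDerivAt (x := p)).const_mul m |>.sub_const d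
  refine h.congr_fderiv ?_
  ext y
  simp [InnerProductSpace.toDual_apply_apply, inner_smul_left]


/-- The velocity-coupled potential `U₂(t,x,v) = m (ω × (x − O)) · v` alone
produces, via the Euler–Lagrange combination `∇ₓU₂ − d/dt(∇ᵥU₂)` along a twice
differentiable curve, the force `−2m ω × ẋ − m ω' × (x − O) − m v_O × ω`. -/
theorem EL_force_of_U2 (m : ℝ) (hm : 0 < m) (O vO ω : ℝ → E3)
    (hO : Differentiable ℝ O) (hω : Differentiable ℝ ω)
    (hO' : ∀ t, deriv O t = vO t)
    (U2 : ℝ → E3 → E3 → ℝ)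
    (hU2 : ∀ t x v, U2 t x v = m * ⟪cross3 (ω t) (x - O t), v⟫)
    (x : ℝ → E3) (hx : Differentiable ℝ x) (hx' : Differentiable ℝ (deriv x)) (t : ℝ) :
    gradient (fun y => U2 t y (deriv x t)) (x t)
        - deriv (fun s => gradient (fun w => U2 s (x s) w) (deriv x s)) t
      = -((2 * m) • cross3 (ω t) (deriv x t))
        - m • cross3 (deriv ω t) (x t - O t)
        - m • cross3 (vO t) (ω t) := by
  have hgrad1 : gradient (fun y => U2 t y (deriv x t)) (x t)
      = m • cross3 (deriv x t) (ω t) := by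
    have hfun : (fun y => U2 t y (deriv x t)) =
        fun y : E3 => m * ⟪cross3 (deriv x t) (ω t), y⟫
          - m * ⟪cross3 (deriv x t) (ω t), O t⟫ := by
      funext y
      rw [hU2, inner3, inner3, inner3]
      simp only [cross3, vec3_0, vec3_1, vec3_2, PiLp.sub_apply]
      ring
    rw [hfun]
    exact (gradB m _ _ _).gradient
  have hgfun : (fun s => gradient (fun w => U2 s (x s) w) (deriv x s)) =
      fun s => m • cross3 (ω s) (x s - O s) := by
    funext s
    have h1 : (fun w => U2 s (x s) w) =
        fun w : E3 => m * ⟪cross3 (ω s) (x s - O s), w⟫ := funext (hU2 s (x s))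
    rw [h1]
    exact (gradA m _ _).gradient
  rw [hgrad1, hgfun]
  have hd : HasDerivAt (fun s => m • cross3 (ω s) (x s - O s))
      (m • (cross3 (deriv ω t) (x t - O t) + cross3 (ω t) (deriv x t - deriv O t))) t :=
    (hasDerivAt_cross ω (fun s => x s - O s) (deriv ω t) (deriv x t - deriv O t) t
      (hω t).hasDerivAt ((hx t).hasDerivAt.sub (hO t).hasDerivAt)).const_smul m
  rw [hd.deriv, hO' t]
  ext i
  fin_cases i <;>
    simp [cross3, vec3, PiLp.sub_apply, PiLp.add_apply,
      PiLp.smul_apply, PiLp.neg_apply, smul_eq_mul] <;> ring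
end
end
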